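/- arXiv:2501.13664 — 2 statements merged into one kernel-verified Lean document; each statement's English description precedes it below -/
import Mathlib

section
/- The 2D DRT at the final stage computes discrete line sums: with N = 2^n and f : {0,...,N-1}² → ℤ extended by zero, the stage-n partial transform satisfies f^n(s, d) = Σ_{u=0}^{N-1} f(u, L^n_s(u) + d) for every slope s ∈ {0,...,N-1} and displacement d ∈ {-(N-1),...,N-1}, where L^n_s(u) is the discrete line function applied to the binary digits of u. -/
open Finset

/-- Closed-form discrete line `l^n_s(u_0,...,u_{n-1})`. -/
def dline (n s : ℕ) (u : ℕ → ℕ) : ℕ :=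
  ∑ i ∈ Finset.range n, u (n - 1 - i) * ((s / 2 ^ i + 1) / 2)

/-- `i`-th binary digit of `k` (least significant first). -/
def bit (k i : ℕ) : ℕ := k / 2 ^ i % 2

/-- Discrete line applied to the binary digits of `k`. -/
def Lline (n s k : ℕ) : ℕ := dline n s (bit k)

/-- The iterative multiscale 2D DRT: stage 0 reads the input, each stage applies the
two-scale recursion `f^{m+1}((s',σ),v,d) = f^m(σ,(0,v),d) + f^m(σ,(1,v),d+s'+λ(σ))`,
with slope and block indices in decimal. -/
def drtStage (f : ℤ → ℤ → ℤ) : ℕ → ℕ → ℕ → ℤ → ℤ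
  | 0, _, v, d => f (v : ℤ) d
  | m + 1, s, v, d =>
      drtStage f m (s / 2) (2 * v) d +
      drtStage f m (s / 2) (2 * v + 1) (d + (s % 2 : ℤ) + (s / 2 : ℤ))

lemma sum_range_split {M : Type*} [AddCommMonoid M] (a b : ℕ) (g : ℕ → M) :
    ∑ u ∈ range (a + b), g u = (∑ u ∈ range a, g u) + ∑ u ∈ range b, g (a + u) := by
  induction b with
  | zero => simp
  | succ b ih => rw [← Nat.add_assoc, sum_range_succ, ih, sum_range_succ, add_assoc]

lemma bit_low {u m : ℕ} (hu : u < 2 ^ m) : bit u m = 0 := by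
  simp [bit, Nat.div_eq_of_lt hu]

lemma bit_add_pow {u m j : ℕ} (hj : j < m) : bit (2 ^ m + u) j = bit u j := by
  unfold bit
  have h : 2 ^ m = (2 * 2 ^ (m - 1 - j)) * 2 ^ j := by
    rw [mul_assoc, ← pow_add, ← pow_succ']
    congr 1; omega
  rw [h, mul_comm _ (2 ^ j), Nat.mul_add_div (pow_pos (by norm_num : (0:ℕ) < 2) j),
    add_comm, Nat.add_mul_mod_self_left]

lemma bit_add_pow_self (u m : ℕ) (hu : u < 2 ^ m) : bit (2 ^ m + u) m = 1 := by
  unfold bit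
  rw [add_comm, Nat.add_div_right _ (pow_pos (by norm_num : (0:ℕ) < 2) m),
    Nat.div_eq_of_lt hu]

lemma Lline_succ (m s u : ℕ) (hu : u < 2 ^ m) :
    Lline (m + 1) s u = Lline m (s / 2) u := by
  unfold Lline dline
  rw [Finset.sum_range_succ']
  have h0 : bit u (m + 1 - 1 - 0) = 0 := bit_low hu
  rw [h0]
  simp only [zero_mul, add_zero]
  apply Finset.sum_congr rfl
  intro i hi
  simp only [Finset.mem_range] at hi
  have : m + 1 - 1 - (i + 1) = m - 1 - i := by omega
  rw [this]
  congr 2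
  rw [Nat.div_div_eq_div_mul, ← pow_succ']

lemma Lline_succ_high (m s u : ℕ) (hu : u < 2 ^ m) :
    Lline (m + 1) s (2 ^ m + u) = (s + 1) / 2 + Lline m (s / 2) u := by
  unfold Lline dline
  rw [Finset.sum_range_succ']
  have h0 : bit (2 ^ m + u) (m + 1 - 1 - 0) = 1 := bit_add_pow_self u m hu
  rw [h0, add_comm]
  simp only [pow_zero, Nat.div_one, one_mul]
  congr 1
  apply Finset.sum_congr rfl
  intro i hi
  simp only [Finset.mem_range] at hi
  have h1 : m + 1 - 1 - (i + 1) = m - 1 - i := by omega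
  rw [h1, bit_add_pow (by omega)]
  congr 2
  rw [Nat.div_div_eq_div_mul, ← pow_succ']

lemma drtStage_eq (f : ℤ → ℤ → ℤ) (m : ℕ) : ∀ (s v : ℕ) (d : ℤ),
    drtStage f m s v d =
      ∑ u ∈ Finset.range (2 ^ m), f ((2 ^ m * v + u : ℕ) : ℤ) ((Lline m s u : ℤ) + d) := by
  induction m with
  | zero => intro s v d; simp [drtStage, Lline, dline]
  | succ m ih =>
    intro s v d
    rw [drtStage, ih, ih, pow_succ,
      show 2 ^ m * 2 = 2 ^ m + 2 ^ m by ring, sum_range_split]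
    congr 1
    · apply Finset.sum_congr rfl
      intro u hu
      simp only [Finset.mem_range] at hu
      rw [Lline_succ m s u hu]
      congr 2
      ring
    · apply Finset.sum_congr rfl
      intro u hu
      simp only [Finset.mem_range] at hu
      rw [Lline_succ_high m s u hu]
      congr 1
      · push_cast; ring
      · push_cast
        have h2 : ((s + 1) / 2 : ℕ) = s / 2 + s % 2 := by omega
        omega

theorem drt2_final_stage (n : ℕ) (f : ℤ → ℤ → ℤ)
    (hf : ∀ x y : ℤ, x < 0 ∨ (2 : ℤ) ^ n ≤ x ∨ y < 0 ∨ (2 : ℤ) ^ n ≤ y → f x y = 0)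
    (s : ℕ) (hs : s < 2 ^ n) (d : ℤ)
    (hd : -((2 : ℤ) ^ n - 1) ≤ d ∧ d ≤ (2 : ℤ) ^ n - 1) :
    drtStage f n s 0 d = ∑ u ∈ Finset.range (2 ^ n), f (u : ℤ) ((Lline n s u : ℤ) + d) := by
  rw [drtStage_eq]
  simp
end

section
/- Correctness of the 3D DJT (lines) recursion: let N = 2^n and f : {0,...,N-1}³ → ℤ extended by zero. Define f^m(v, σ₁, σ₂, d₁, d₂) = Σ_{u ∈ {0,1}^m} f(λ(u,v), l^m_{λ(σ₁)}(u) + d₁, l^m_{λ(σ₂)}(u) + d₂). Then f^{m+1}(v, (s₁,σ₁), (s₂,σ₂), d₁, d₂) = f^m((0,v), σ₁, σ₂, d₁, d₂) + f^m((1,v), σ₁, σ₂, d₁ + s₁ + λ(σ₁), d₂ + s₂ + λ(σ₂)) for all bits s₁, s₂, tuples σ₁, σ₂ ∈ {0,1}^m, v ∈ {0,1}^{n-m-1}, and integers d₁, d₂. -/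
open Finset

/-- Partial 3D DJT:
`f^m(v|σ₁|σ₂|d₁|d₂) = Σ_{u∈{0,1}^m} f(λ(u,v), l^m_{λ(σ₁)}(u)+d₁, l^m_{λ(σ₂)}(u)+d₂)`,
with slopes and block index in decimal. -/
def pdjt (m : ℕ) (f : ℤ → ℤ → ℤ → ℤ) (v s₁ s₂ : ℕ) (d₁ d₂ : ℤ) : ℤ :=
  ∑ u ∈ Finset.range (2 ^ m),
    f ((u : ℤ) + 2 ^ m * (v : ℤ)) ((Lline m s₁ u : ℤ) + d₁) ((Lline m s₂ u : ℤ) + d₂)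

lemma bit_high {m u : ℕ} (h : u < 2^m) : bit u m = 0 := by
  simp [bit, Nat.div_eq_of_lt h]

lemma bit_top {m u : ℕ} (h : u < 2^m) : bit (2^m + u) m = 1 := by
  unfold bit
  rw [Nat.add_comm, Nat.add_div_right _ (by positivity : (0:ℕ) < 2^m),
    Nat.div_eq_of_lt h]

lemma bit_low_s10 {m u i : ℕ} (h : i < m) : bit (2^m + u) i = bit u i := by
  unfold bit
  have h2 : 2^m = 2^i * (2 * 2^(m - i - 1)) := by
    rw [← pow_succ', ← pow_add]
    congr 1
    omega
  rw [h2, Nat.add_comm, Nat.add_mul_div_left _ _ (by positivity : (0:ℕ) < 2^i),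
    Nat.add_mul_mod_self_left]

lemma div_step {s : ℕ} (σ i : ℕ) (hs : s ≤ 1) : (s + 2*σ) / 2^(i+1) = σ / 2^i := by
  rw [pow_succ', ← Nat.div_div_eq_div_mul]
  congr 1
  omega

lemma Lline_low {m s σ u : ℕ} (hs : s ≤ 1) (hu : u < 2^m) :
    Lline (m+1) (s + 2*σ) u = Lline m σ u := by
  unfold Lline dline
  rw [Finset.sum_range_succ']
  have h0 : bit u (m + 1 - 1 - 0) = 0 := bit_high hu
  rw [h0, zero_mul, add_zero]
  apply Finset.sum_congr rfl
  intro i hi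
  rw [div_step σ i hs]
  congr 2
  omega

lemma Lline_high {m s σ u : ℕ} (hs : s ≤ 1) (hu : u < 2^m) :
    Lline (m+1) (s + 2*σ) (2^m + u) = s + σ + Lline m σ u := by
  unfold Lline dline
  rw [Finset.sum_range_succ']
  have h0 : bit (2^m + u) (m + 1 - 1 - 0) = 1 := bit_top hu
  rw [h0, one_mul]
  have h1 : (s + 2*σ) / 2^(0:ℕ) = s + 2*σ := by simp
  rw [h1]
  have h2 : (s + 2*σ + 1) / 2 = s + σ := by omega
  rw [h2, add_comm]
  congr 1
  apply Finset.sum_congr rfl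
  intro i hi
  rw [Finset.mem_range] at hi
  rw [div_step σ i hs, show m + 1 - 1 - (i + 1) = m - 1 - i by omega,
    bit_low_s10 (by omega)]

theorem djt3_recursion (n m : ℕ) (hm : m < n) (f : ℤ → ℤ → ℤ → ℤ)
    (hf : ∀ x y z : ℤ,
      x < 0 ∨ (2 : ℤ) ^ n ≤ x ∨ y < 0 ∨ (2 : ℤ) ^ n ≤ y ∨ z < 0 ∨ (2 : ℤ) ^ n ≤ z →
      f x y z = 0)
    (s₁ : ℕ) (hs₁ : s₁ ≤ 1) (s₂ : ℕ) (hs₂ : s₂ ≤ 1)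
    (σ₁ : ℕ) (hσ₁ : σ₁ < 2 ^ m) (σ₂ : ℕ) (hσ₂ : σ₂ < 2 ^ m)
    (v : ℕ) (hv : v < 2 ^ (n - m - 1)) (d₁ d₂ : ℤ) :
    pdjt (m + 1) f v (s₁ + 2 * σ₁) (s₂ + 2 * σ₂) d₁ d₂ =
      pdjt m f (2 * v) σ₁ σ₂ d₁ d₂ +
      pdjt m f (2 * v + 1) σ₁ σ₂ (d₁ + (s₁ : ℤ) + (σ₁ : ℤ)) (d₂ + (s₂ : ℤ) + (σ₂ : ℤ)) := by
  unfold pdjt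
  rw [show (2:ℕ)^(m+1) = 2^m + 2^m by ring, Finset.sum_range_add]
  congr 1
  · apply Finset.sum_congr rfl
    intro u hu
    rw [Finset.mem_range] at hu
    rw [Lline_low hs₁ hu, Lline_low hs₂ hu]
    congr 1
    push_cast
    ring
  · apply Finset.sum_congr rfl
    intro u hu
    rw [Finset.mem_range] at hu
    rw [Lline_high hs₁ hu, Lline_high hs₂ hu]
    push_cast
    ring_nf
end
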